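/- If f_k → f uniformly on [a,b], then f is continuously differentiable on [a,b] and f_k' → f' uniformly on [a,b]. -/

import Mathlib

open MeasureTheory Set Filter Topology

set_option maxHeartbeats 1600000

/-- Helper: the integral of `φ` over a subinterval `x..y` of `[c,d]` is bounded in absolute
value by the integral of `|φ|` over `[c,d]`. -/
lemma abs_intervalIntegral_le_aux {φ : ℝ → ℝ} {c d x y : ℝ}
    (hφ : IntervalIntegrable φ volume c d)
    (hx : x ∈ Set.Icc c d) (hy : y ∈ Set.Icc c d) :
    |∫ s in x..y, φ s| ≤ ∫ s in c..d, |φ s| := by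
  have habs : IntervalIntegrable (fun s => |φ s|) volume c d := hφ.abs
  have hnn : 0 ≤ᵐ[volume.restrict (Set.Ioc c d)] fun s => |φ s| :=
    Filter.Eventually.of_forall fun s => abs_nonneg _
  have main : ∀ u v : ℝ, u ∈ Set.Icc c d → v ∈ Set.Icc c d → u ≤ v →
      |∫ s in u..v, φ s| ≤ ∫ s in c..d, |φ s| := by
    intro u v hu hv huv
    calc |∫ s in u..v, φ s| ≤ ∫ s in u..v, |φ s| := by
          simpa [Real.norm_eq_abs] using
            intervalIntegral.norm_integral_le_integral_norm (f := φ) (μ := volume) huv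
      _ ≤ ∫ s in c..d, |φ s| :=
          intervalIntegral.integral_mono_interval hu.1 huv hv.2 hnn habs
  rcases le_total x y with hxy | hxy
  · exact main x y hx hy hxy
  · rw [intervalIntegral.integral_symm, abs_neg]
    exact main y x hy hx hxy

/-- If `f_k : [a,b] → ℝ` are `C¹` with absolutely continuous derivatives whose second
derivatives satisfy a uniform `L²` bound `∫_a^b |f_k''|² ≤ M`, and `f_k → f` uniformly on
`[a,b]`, then `f` is continuously differentiable on `[a,b]` and `f_k' → f'` uniformly on
`[a,b]`. -/
theorem stmt_14 (a b M : ℝ) (hab : a < b) (hM : 0 < M)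
    (f : ℝ → ℝ) (fk fk' fk'' : ℕ → ℝ → ℝ)
    (hderiv : ∀ k : ℕ, ∀ x ∈ Set.Icc a b,
      HasDerivWithinAt (fk k) (fk' k x) (Set.Icc a b) x)
    (hcont : ∀ k : ℕ, ContinuousOn (fk' k) (Set.Icc a b))
    (hAC : ∀ k : ℕ, ∀ x ∈ Set.Icc a b, fk' k x = fk' k a + ∫ s in a..x, fk'' k s)
    (hint : ∀ k : ℕ, IntervalIntegrable (fk'' k) volume a b)
    (hintsq : ∀ k : ℕ, IntervalIntegrable (fun x => |fk'' k x| ^ 2) volume a b)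
    (hL2 : ∀ k : ℕ, (∫ x in a..b, |fk'' k x| ^ 2) ≤ M)
    (hunif : TendstoUniformlyOn (fun k x => fk k x) f atTop (Set.Icc a b)) :
    ∃ f' : ℝ → ℝ,
      ContinuousOn f' (Set.Icc a b) ∧
      (∀ x ∈ Set.Icc a b, HasDerivWithinAt f (f' x) (Set.Icc a b) x) ∧
      TendstoUniformlyOn (fun k x => fk' k x) f' atTop (Set.Icc a b) := by
  have hab' : a ≤ b := hab.le
  -- each fk is continuous on [a,b]
  have hfkcont : ∀ k, ContinuousOn (fk k) (Set.Icc a b) :=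
    fun k x hx => (hderiv k x hx).continuousWithinAt
  -- fk' is interval integrable on subintervals of [a,b]
  have hfk'int : ∀ k, ∀ c d : ℝ, c ∈ Set.Icc a b → d ∈ Set.Icc a b →
      IntervalIntegrable (fk' k) volume c d := by
    intro k c d hc hd
    exact ((hcont k).mono (uIcc_subset_Icc hc hd)).intervalIntegrable
  -- fk'' is interval integrable on subintervals of [a,b]
  have hfk''int : ∀ k, ∀ c d : ℝ, c ∈ Set.Icc a b → d ∈ Set.Icc a b →
      IntervalIntegrable (fk'' k) volume c d := by
    intro k c d hc hd
    refine (hint k).mono_set ?_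
    rw [uIcc_of_le hab']
    exact uIcc_subset_Icc hc hd
  -- FTC for fk on subintervals
  have ftc : ∀ k, ∀ c d : ℝ, c ∈ Set.Icc a b → d ∈ Set.Icc a b → c ≤ d →
      ∫ y in c..d, fk' k y = fk k d - fk k c := by
    intro k c d hc hd hcd
    refine intervalIntegral.integral_eq_sub_of_hasDerivAt_of_le hcd
      ((hfkcont k).mono (Icc_subset_Icc hc.1 hd.2)) (fun x hx => ?_)
      (hfk'int k c d hc hd)
    have hx1 : a < x := lt_of_le_of_lt hc.1 hx.1
    have hx2 : x < b := lt_of_lt_of_le hx.2 hd.2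
    exact (hderiv k x ⟨hx1.le, hx2.le⟩).hasDerivAt (Icc_mem_nhds hx1 hx2)
  -- uniform Cauchy of fk
  have hfkC : UniformCauchySeqOn (fun k x => fk k x) atTop (Set.Icc a b) :=
    hunif.uniformCauchySeqOn
  -- Main step : uniform Cauchy of fk'
  have key : UniformCauchySeqOn (fun k x => fk' k x) atTop (Set.Icc a b) := by
    rw [Metric.uniformCauchySeqOn_iff]
    intro ε hε
    set t : ℝ := 8 * M / ε with ht
    have htpos : 0 < t := by positivity
    set h : ℝ := min (b - a) (ε / (2 * t)) with hh
    have hhpos : 0 < h := lt_min (by linarith) (by positivity)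
    have hhba : h ≤ b - a := min_le_left _ _
    have hth : t * h / 2 ≤ ε / 4 := by
      have h1 : h ≤ ε / (2 * t) := min_le_right _ _
      have h2 : t * h ≤ t * (ε / (2 * t)) :=
        mul_le_mul_of_nonneg_left h1 htpos.le
      have h3 : t * (ε / (2 * t)) = ε / 2 := by field_simp
      linarith
    have h4M : 4 * M / (2 * t) = ε / 4 := by
      rw [ht]; field_simp; ring
    set δ : ℝ := ε * h / 8 with hδ
    have hδpos : 0 < δ := by positivity
    obtain ⟨N, hN⟩ := Metric.uniformCauchySeqOn_iff.mp hfkC δ hδpos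
    refine ⟨N, fun k hk j hj x hx => ?_⟩
    -- set up the auxiliary interval [c, c+h] containing x
    set c : ℝ := min x (b - h) with hc
    have hac : a ≤ c := le_min hx.1 (by linarith)
    have hcx : c ≤ x := min_le_left _ _
    have hxd : x ≤ c + h := by
      rcases le_total x (b - h) with H | H
      · rw [hc, min_eq_left H]; linarith
      · rw [hc, min_eq_right H]; linarith [hx.2]
    have hdb : c + h ≤ b := by
      have : c ≤ b - h := min_le_right _ _
      linarith
    have hcd : c ≤ c + h := by linarith
    have hcm : c ∈ Set.Icc a b := ⟨hac, by linarith⟩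
    have hdm : c + h ∈ Set.Icc a b := ⟨by linarith, hdb⟩
    have hsubI : Set.Icc c (c + h) ⊆ Set.Icc a b := Icc_subset_Icc hac hdb
    -- notation for differences
    set G : ℝ → ℝ := fun y => fk k y - fk j y with hG
    set G' : ℝ → ℝ := fun y => fk' k y - fk' j y with hG'
    set G'' : ℝ → ℝ := fun y => fk'' k y - fk'' j y with hG''
    -- integrability facts for G''
    have hGint_ab : IntervalIntegrable G'' volume a b := (hint k).sub (hint j)
    have hGint_cd : IntervalIntegrable G'' volume c (c + h) := by
      refine hGint_ab.mono_set ?_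
      rw [uIcc_of_le hab']
      exact uIcc_subset_Icc hcm hdm
    have hGabs_cd : IntervalIntegrable (fun s => |G'' s|) volume c (c + h) := hGint_cd.abs
    -- |G''|^2 is interval integrable on [a,b]
    have hGsq_ab : IntervalIntegrable (fun s => |G'' s| ^ 2) volume a b := by
      have hbd : IntervalIntegrable (fun s => 2 * |fk'' k s| ^ 2 + 2 * |fk'' j s| ^ 2)
          volume a b := ((hintsq k).const_mul 2).add ((hintsq j).const_mul 2)
      rw [intervalIntegrable_iff] at hbd ⊢
      have hmeas : AEStronglyMeasurable (fun s => |G'' s| ^ 2)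
          (volume.restrict (Set.uIoc a b)) := by
        have hm := (intervalIntegrable_iff.mp hGint_ab).aestronglyMeasurable
        have heq2 : (fun s => |G'' s| ^ 2) = fun s => G'' s * G'' s := by
          funext s; rw [sq_abs, sq]
        rw [heq2]
        exact hm.mul hm
      refine Integrable.mono' hbd hmeas (Filter.Eventually.of_forall fun s => ?_)
      rw [Real.norm_eq_abs, abs_of_nonneg (by positivity)]
      have h1 : |G'' s| ^ 2 = (fk'' k s - fk'' j s) ^ 2 := by rw [sq_abs]
      have h2 : |fk'' k s| ^ 2 = (fk'' k s) ^ 2 := sq_abs _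
      have h3 : |fk'' j s| ^ 2 = (fk'' j s) ^ 2 := sq_abs _
      rw [h1, h2, h3]
      nlinarith [sq_nonneg (fk'' k s + fk'' j s)]
    have hGsq_cd : IntervalIntegrable (fun s => |G'' s| ^ 2) volume c (c + h) := by
      refine hGsq_ab.mono_set ?_
      rw [uIcc_of_le hab']
      exact uIcc_subset_Icc hcm hdm
    -- L² bound : ∫_a^b |G''|² ≤ 4M
    have hsq4M : (∫ s in a..b, |G'' s| ^ 2) ≤ 4 * M := by
      have hmono : (∫ s in a..b, |G'' s| ^ 2) ≤
          ∫ s in a..b, (2 * |fk'' k s| ^ 2 + 2 * |fk'' j s| ^ 2) := by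
        refine intervalIntegral.integral_mono_on hab' hGsq_ab
          (((hintsq k).const_mul 2).add ((hintsq j).const_mul 2)) fun s _ => ?_
        have h1 : |G'' s| ^ 2 = (fk'' k s - fk'' j s) ^ 2 := by rw [sq_abs]
        have h2 : |fk'' k s| ^ 2 = (fk'' k s) ^ 2 := sq_abs _
        have h3 : |fk'' j s| ^ 2 = (fk'' j s) ^ 2 := sq_abs _
        rw [h1, h2, h3]
        nlinarith [sq_nonneg (fk'' k s + fk'' j s)]
      have heq : (∫ s in a..b, (2 * |fk'' k s| ^ 2 + 2 * |fk'' j s| ^ 2)) =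
          2 * (∫ s in a..b, |fk'' k s| ^ 2) + 2 * ∫ s in a..b, |fk'' j s| ^ 2 := by
        rw [intervalIntegral.integral_add ((hintsq k).const_mul 2) ((hintsq j).const_mul 2),
          intervalIntegral.integral_const_mul, intervalIntegral.integral_const_mul]
      have hk2 := hL2 k
      have hj2 := hL2 j
      rw [heq] at hmono
      linarith
    -- ∫_c^{c+h} |G''| ≤ ε/2
    have hB : (∫ s in c..c + h, |G'' s|) ≤ ε / 2 := by
      have step1 : (∫ s in c..c + h, |G'' s|) ≤
          ∫ s in c..c + h, (t / 2 + |G'' s| ^ 2 / (2 * t)) := by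
        refine intervalIntegral.integral_mono_on hcd hGabs_cd
          (intervalIntegrable_const.add (hGsq_cd.div_const _)) fun s _ => ?_
        have h2t : (0:ℝ) < 2 * t := by positivity
        have h1 : 2 * t * |G'' s| ≤ t ^ 2 + |G'' s| ^ 2 := by
          nlinarith [sq_nonneg (|G'' s| - t)]
        have h2 : |G'' s| ≤ (t ^ 2 + |G'' s| ^ 2) / (2 * t) := by
          rw [le_div_iff₀ h2t]; linarith
        have h3 : (t ^ 2 + |G'' s| ^ 2) / (2 * t) = t / 2 + |G'' s| ^ 2 / (2 * t) := by
          field_simp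
        linarith
      have step2 : (∫ s in c..c + h, (t / 2 + |G'' s| ^ 2 / (2 * t))) =
          t / 2 * h + (∫ s in c..c + h, |G'' s| ^ 2) / (2 * t) := by
        rw [intervalIntegral.integral_add intervalIntegrable_const (hGsq_cd.div_const _),
          intervalIntegral.integral_const, intervalIntegral.integral_div, smul_eq_mul]
        ring
      have step3 : (∫ s in c..c + h, |G'' s| ^ 2) ≤ ∫ s in a..b, |G'' s| ^ 2 :=
        intervalIntegral.integral_mono_interval hac hcd hdb
          (Filter.Eventually.of_forall fun s => by positivity) hGsq_ab
      have hfrac : (∫ s in c..c + h, |G'' s| ^ 2) / (2 * t) ≤ ε / 4 := by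
        rw [← h4M]
        gcongr
        exact step3.trans hsq4M
      linarith
    -- pointwise difference formula for G'
    have hstep : ∀ y ∈ Set.Icc c (c + h), G' y - G' x = ∫ s in x..y, G'' s := by
      intro y hy
      have hyab : y ∈ Set.Icc a b := hsubI hy
      have ham : a ∈ Set.Icc a b := left_mem_Icc.mpr hab'
      have ik_y := hfk''int k a y ham hyab
      have ik_x := hfk''int k a x ham hx
      have ij_y := hfk''int j a y ham hyab
      have ij_x := hfk''int j a x ham hx
      have ik_xy := hfk''int k x y hx hyab
      have ij_xy := hfk''int j x y hx hyab
      have e1 := intervalIntegral.integral_interval_sub_left ik_y ik_x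
      have e2 := intervalIntegral.integral_interval_sub_left ij_y ij_x
      have e3 := intervalIntegral.integral_sub ik_xy ij_xy
      calc G' y - G' x
          = ((∫ s in a..y, fk'' k s) - ∫ s in a..x, fk'' k s) -
            ((∫ s in a..y, fk'' j s) - ∫ s in a..x, fk'' j s) := by
            simp only [hG']
            rw [hAC k y hyab, hAC j y hyab, hAC k x hx, hAC j x hx]
            ring
        _ = (∫ s in x..y, fk'' k s) - ∫ s in x..y, fk'' j s := by rw [e1, e2]
        _ = ∫ s in x..y, G'' s := by
            simp only [hG'']
            rw [← e3]
    -- bound on the inner term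
    have hbound : ∀ y ∈ Set.uIoc c (c + h), ‖G' y - G' x‖ ≤ ε / 2 := by
      intro y hy
      have hy' : y ∈ Set.Icc c (c + h) := by
        rw [Set.uIoc_of_le hcd] at hy
        exact ⟨hy.1.le, hy.2⟩
      rw [hstep y hy', Real.norm_eq_abs]
      have habs := abs_intervalIntegral_le_aux hGint_cd ⟨hcx, hxd⟩ hy'
      linarith
    -- integral identities
    have hGi : IntervalIntegrable G' volume c (c + h) :=
      (hfk'int k c (c + h) hcm hdm).sub (hfk'int j c (c + h) hcm hdm)
    have hI1 : ∫ y in c..c + h, G' y = G (c + h) - G c := by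
      simp only [hG', hG]
      rw [intervalIntegral.integral_sub (hfk'int k c (c + h) hcm hdm)
        (hfk'int j c (c + h) hcm hdm), ftc k c (c + h) hcm hdm hcd,
        ftc j c (c + h) hcm hdm hcd]
      ring
    have hI2 : ∫ y in c..c + h, (G' y - G' x) = (G (c + h) - G c) - h * G' x := by
      rw [intervalIntegral.integral_sub hGi intervalIntegrable_const, hI1,
        intervalIntegral.integral_const, smul_eq_mul]
      ring
    have hnormI2 : |∫ y in c..c + h, (G' y - G' x)| ≤ ε / 2 * h := by
      have := intervalIntegral.norm_integral_le_of_norm_le_const hbound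
      rw [Real.norm_eq_abs] at this
      have habs2 : |c + h - c| = h := by
        rw [add_sub_cancel_left]; exact abs_of_nonneg hhpos.le
      rw [habs2] at this
      exact this
    -- uniform smallness of G at the endpoints
    have hGd : |G (c + h)| < δ := by
      have := hN k hk j hj (c + h) hdm
      rw [Real.dist_eq] at this
      simpa [hG] using this
    have hGc : |G c| < δ := by
      have := hN k hk j hj c hcm
      rw [Real.dist_eq] at this
      simpa [hG] using this
    -- combine
    have hkey : h * G' x = (G (c + h) - G c) - ∫ y in c..c + h, (G' y - G' x) := by
      linarith [hI2]
    have habs3 : h * |G' x| ≤ 2 * δ + ε / 2 * h := by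
      have e : |h * G' x| ≤ |G (c + h)| + |G c| + |∫ y in c..c + h, (G' y - G' x)| := by
        rw [hkey]
        have t1 := abs_add_le (G (c + h) - G c) (-(∫ y in c..c + h, (G' y - G' x)))
        rw [← sub_eq_add_neg, abs_neg] at t1
        have t2 := abs_add_le (G (c + h)) (-(G c))
        rw [← sub_eq_add_neg, abs_neg] at t2
        linarith
      have e2 : |h * G' x| = h * |G' x| := by
        rw [abs_mul, abs_of_nonneg hhpos.le]
      linarith
    have hfinal : |G' x| < ε := by
      have h5 : h * |G' x| ≤ 3 / 4 * (ε * h) := by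
        rw [hδ] at habs3; linarith
      nlinarith [mul_pos hhpos hε, abs_nonneg (G' x)]
    simp only [Real.dist_eq]
    simpa [hG'] using hfinal
  -- pointwise limit of the derivatives
  have hptC : ∀ x ∈ Set.Icc a b, CauchySeq fun n => fk' n x := fun x hx => key.cauchySeq hx
  set F' : ℝ → ℝ := fun x => limUnder atTop fun n => fk' n x with hF'
  have htendF : ∀ x ∈ Set.Icc a b, Tendsto (fun n => fk' n x) atTop (𝓝 (F' x)) :=
    fun x hx => (hptC x hx).tendsto_limUnder
  have hTU : TendstoUniformlyOn (fun k x => fk' k x) F' atTop (Set.Icc a b) :=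
    key.tendstoUniformlyOn_of_tendsto htendF
  have hF'cont : ContinuousOn F' (Set.Icc a b) :=
    hTU.continuousOn (Filter.Eventually.of_forall hcont).frequently
  -- continuous extension of F'
  set proj : ℝ → ℝ := fun y => max a (min b y) with hproj
  have hprojmem : ∀ y, proj y ∈ Set.Icc a b :=
    fun y => ⟨le_max_left _ _, max_le hab' (min_le_left _ _)⟩
  have hprojid : ∀ y ∈ Set.Icc a b, proj y = y := by
    intro y hy
    simp only [hproj]
    rw [min_eq_right hy.2, max_eq_right hy.1]
  set g' : ℝ → ℝ := fun y => F' (proj y) with hg'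
  have hprojcont : Continuous proj := continuous_const.max (continuous_const.min continuous_id)
  have hg'cont : Continuous g' := hF'cont.comp_continuous hprojcont hprojmem
  have hg'eq : ∀ y ∈ Set.Icc a b, g' y = F' y := by
    intro y hy
    simp only [hg']
    rw [hprojid y hy]
  -- identification of f with an antiderivative of g'
  have hfeq : ∀ x ∈ Set.Icc a b, f x = f a + ∫ s in a..x, g' s := by
    intro x hx
    have hma : a ∈ Set.Icc a b := left_mem_Icc.mpr hab'
    have hfa : Tendsto (fun n => fk n a) atTop (𝓝 (f a)) := hunif.tendsto_at hma
    have hfx : Tendsto (fun n => fk n x) atTop (𝓝 (f x)) := hunif.tendsto_at hx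
    have hIg : IntervalIntegrable g' volume a x := hg'cont.intervalIntegrable a x
    have hintlim : Tendsto (fun n => ∫ s in a..x, fk' n s) atTop
        (𝓝 (∫ s in a..x, g' s)) := by
      rw [Metric.tendsto_atTop]
      intro ε hε
      have hba1 : (0:ℝ) < b - a + 1 := by linarith
      obtain ⟨N, hN⟩ := Filter.eventually_atTop.mp
        ((Metric.tendstoUniformlyOn_iff.mp hTU) (ε / (2 * (b - a + 1))) (by positivity))
      refine ⟨N, fun n hn => ?_⟩
      have hbound : ∀ s ∈ Set.uIoc a x, ‖fk' n s - g' s‖ ≤ ε / (2 * (b - a + 1)) := by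
        intro s hs
        have hs' : s ∈ Set.Icc a b := by
          rw [Set.uIoc_of_le hx.1] at hs
          exact ⟨hs.1.le, hs.2.trans hx.2⟩
        have hd := hN n hn s hs'
        rw [Real.dist_eq] at hd
        rw [Real.norm_eq_abs, hg'eq s hs', abs_sub_comm]
        linarith
      have hsub : ∫ s in a..x, (fk' n s - g' s) =
          (∫ s in a..x, fk' n s) - ∫ s in a..x, g' s :=
        intervalIntegral.integral_sub (hfk'int n a x hma hx) hIg
      have hnorm := intervalIntegral.norm_integral_le_of_norm_le_const hbound
      rw [Real.dist_eq, ← hsub]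
      calc |∫ s in a..x, (fk' n s - g' s)|
          ≤ ε / (2 * (b - a + 1)) * |x - a| := by
            simpa [Real.norm_eq_abs] using hnorm
        _ ≤ ε / (2 * (b - a + 1)) * (b - a + 1) := by
            gcongr
            rw [abs_of_nonneg (by linarith [hx.1])]
            linarith [hx.2]
        _ = ε / 2 := by field_simp
        _ < ε := by linarith
    have hfn : (fun n => fk n x) = fun n => fk n a + ∫ s in a..x, fk' n s := by
      funext n
      have := ftc n a x (left_mem_Icc.mpr hab') hx hx.1
      linarith
    have hlim2 : Tendsto (fun n => fk n x) atTop (𝓝 (f a + ∫ s in a..x, g' s)) := by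
      rw [hfn]
      exact hfa.add hintlim
    exact tendsto_nhds_unique hfx hlim2
  -- conclusion
  refine ⟨F', hF'cont, fun x hx => ?_, hTU⟩
  have hF : HasDerivAt (fun u => f a + ∫ s in a..u, g' s) (g' x) x :=
    HasDerivAt.const_add _ ((hg'cont.integral_hasStrictDerivAt a x).hasDerivAt)
  have hFw : HasDerivWithinAt (fun u => f a + ∫ s in a..u, g' s) (F' x) (Set.Icc a b) x := by
    rw [← hg'eq x hx]
    exact hF.hasDerivWithinAt
  exact hFw.congr (fun y hy => hfeq y hy) (hfeq x hx)
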